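/- Let A : (-∞,0] → End(V) be continuous on a finite-dimensional normed vector space V, with sup_{t≤0}‖A(t)-A₀‖ < ∞. Suppose ε > 0, A₀ ∈ End(V), and t₀ ≤ 0 are such that ‖A(t) - A₀‖ < (ε/2)/M(A₀, ε/2) for all t ≤ t₀, where M(A₀,δ) := sup_{t≤0}‖exp(t(A₀ - ℓ(A₀) + δ))‖ and ℓ(A₀) is the minimal real part of the spectrum of A₀. Then the solution E of E'(t)=A(t)E(t), E(0)=id satisfies ‖E(t)‖ ≤ C · exp(t(ℓ(A₀) - ε)) for all t ≤ 0, with C = M(A₀,ε/2)·M(A₀,ε)·exp(-t₀·M(A₀,ε)·sup_{t≤0}‖A(t)-A₀‖). -/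

import Mathlib

open intervalIntegral MeasureTheory Set in
lemma gronwall_back {u : ℝ → ℝ} {a b B Kc : ℝ} (hab : a ≤ b)
    (hu : ContinuousOn u (Set.Icc a b)) (hKc : 0 ≤ Kc)
    (h : ∀ t ∈ Set.Icc a b, u t ≤ B + Kc * ∫ s in t..b, u s) :
    ∀ t ∈ Set.Icc a b, u t ≤ B * Real.exp (Kc * (b - t)) := by
  have hInt : ∀ t ∈ Set.Icc a b, IntervalIntegrable u volume t b := by
    intro t ht
    apply ContinuousOn.intervalIntegrable
    apply hu.mono
    rw [Set.uIcc_of_le ht.2]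
    exact Set.Icc_subset_Icc ht.1 le_rfl
  set Ψ : ℝ → ℝ := fun t => B + Kc * ∫ s in t..b, u s with hΨ
  set W : ℝ → ℝ := fun t => Ψ t * Real.exp (Kc * t) with hW
  have hΨcont : ContinuousOn Ψ (Set.Icc a b) := by
    have h1 : ContinuousOn (fun t => ∫ s in a..t, u s) (Set.Icc a b) := by
      have := intervalIntegral.continuousOn_primitive_interval
        (f := u) (a := a) (b := b) (μ := volume) ?_
      · rwa [Set.uIcc_of_le hab] at this
      · rw [Set.uIcc_of_le hab]
        exact hu.integrableOn_compact isCompact_Icc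
    have h2 : ∀ t ∈ Set.Icc a b,
        Ψ t = B + Kc * ((∫ s in a..b, u s) - ∫ s in a..t, u s) := by
      intro t ht
      have := intervalIntegral.integral_add_adjacent_intervals
        (f := u) (μ := volume) (a := a) (b := t) (c := b)
        ((hInt a ⟨le_rfl, hab⟩).mono_set
          (by rw [Set.uIcc_of_le ht.1, Set.uIcc_of_le hab]
              exact Set.Icc_subset_Icc le_rfl ht.2))
        (hInt t ht)
      simp only [hΨ]
      rw [← this]; ring
    refine ContinuousOn.congr ?_ h2
    exact continuousOn_const.add (continuousOn_const.mul (continuousOn_const.sub h1))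
  have hW' : ∀ x ∈ Set.Ioo a b,
      HasDerivAt W (Kc * (Ψ x - u x) * Real.exp (Kc * x)) x := by
    intro x hx
    have hca : ContinuousAt u x := hu.continuousAt (Icc_mem_nhds hx.1 hx.2)
    have hmeas : StronglyMeasurableAtFilter u (nhds x) volume :=
      ContinuousOn.stronglyMeasurableAtFilter isOpen_Ioo
        (hu.mono Set.Ioo_subset_Icc_self) x hx
    have hΨ' : HasDerivAt Ψ (Kc * (-(u x))) x := by
      have := intervalIntegral.integral_hasDerivAt_left (hInt x ⟨hx.1.le, hx.2.le⟩)
        hmeas hca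
      exact (this.const_mul Kc).const_add B
    have hexp' : HasDerivAt (fun t => Real.exp (Kc * t)) (Real.exp (Kc * x) * Kc) x := by
      have := ((hasDerivAt_id x).const_mul Kc).exp
      simpa using this
    have := hΨ'.fun_mul hexp'
    refine this.congr_deriv ?_
    ring
  have hWcont : ContinuousOn W (Set.Icc a b) :=
    hΨcont.mul (Real.continuous_exp.comp (continuous_const.mul continuous_id)).continuousOn
  have hWmono : MonotoneOn W (Set.Icc a b) := by
    apply monotoneOn_of_deriv_nonneg (convex_Icc a b) hWcont
    · rw [interior_Icc]
      exact fun x hx => (hW' x hx).differentiableAt.differentiableWithinAt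
    · rw [interior_Icc]
      intro x hx
      rw [(hW' x hx).deriv]
      have h1 : u x ≤ Ψ x := h x ⟨hx.1.le, hx.2.le⟩
      exact mul_nonneg (mul_nonneg hKc (sub_nonneg.mpr h1)) (Real.exp_pos _).le
  intro t ht
  have h1 : u t ≤ Ψ t := h t ht
  have h2 : W t ≤ W b := hWmono ht ⟨hab, le_rfl⟩ ht.2
  have h3 : Ψ b = B := by simp [hΨ]
  have h4 : Ψ t * Real.exp (Kc * t) ≤ B * Real.exp (Kc * b) := by
    simpa [hW, h3] using h2
  have h5 : Ψ t ≤ B * Real.exp (Kc * (b - t)) := by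
    calc Ψ t ≤ B * Real.exp (Kc * b) / Real.exp (Kc * t) :=
          (le_div_iff₀ (Real.exp_pos _)).mpr h4
      _ = B * Real.exp (Kc * (b - t)) := by
          rw [mul_div_assoc, ← Real.exp_sub]; ring_nf
  linarith

open NormedSpace in
lemma exp_norm_bound {V : Type*} [NormedAddCommGroup V] [NormedSpace ℂ V]
    [FiniteDimensional ℂ V] (A₀ : V →L[ℂ] V) (ℓ δ Mδ : ℝ)
    (hMδ : ∀ τ : ℝ, τ ≤ 0 →
      ‖exp (τ • (A₀ - (ℓ : ℂ) • (1 : V →L[ℂ] V) + (δ : ℂ) • (1 : V →L[ℂ] V)))‖ ≤ Mδ) :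
    ∀ τ : ℝ, τ ≤ 0 → ‖exp (τ • A₀)‖ ≤ Mδ * Real.exp (τ * (ℓ - δ)) := by
  intro τ hτ
  set B : V →L[ℂ] V := A₀ - (ℓ : ℂ) • (1 : V →L[ℂ] V) + (δ : ℂ) • (1 : V →L[ℂ] V) with hB
  have hsplit : τ • A₀ = τ • B + ((τ * (ℓ - δ) : ℝ) : ℂ) • (1 : V →L[ℂ] V) := by
    rw [hB, ← Complex.coe_smul τ A₀, ← Complex.coe_smul τ (_ + _)]
    push_cast
    module
  have hcomm : Commute (τ • B) (((τ * (ℓ - δ) : ℝ) : ℂ) • (1 : V →L[ℂ] V)) :=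
    ((Commute.one_right (τ • B)).smul_right _)
  letI : NormedAlgebra ℚ (V →L[ℂ] V) := NormedAlgebra.restrictScalars ℚ ℂ (V →L[ℂ] V)
  rw [hsplit, NormedSpace.exp_add_of_commute hcomm]
  have h1 : ‖exp (((τ * (ℓ - δ) : ℝ) : ℂ) • (1 : V →L[ℂ] V))‖ ≤ Real.exp (τ * (ℓ - δ)) := by
    rw [← Algebra.algebraMap_eq_smul_one, ← NormedSpace.algebraMap_exp_comm,
      Algebra.algebraMap_eq_smul_one, ← Complex.exp_eq_exp_ℂ]
    rw [norm_smul]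
    calc ‖Complex.exp (τ * (ℓ - δ) : ℝ)‖ * ‖(1 : V →L[ℂ] V)‖
        ≤ Real.exp (τ * (ℓ - δ)) * 1 := by
          rw [Complex.norm_exp, Complex.ofReal_re]
          gcongr
          rw [ContinuousLinearMap.one_def]; exact ContinuousLinearMap.norm_id_le
      _ = Real.exp (τ * (ℓ - δ)) := mul_one _
  calc ‖exp (τ • B) * exp (((τ * (ℓ - δ) : ℝ) : ℂ) • (1 : V →L[ℂ] V))‖
      ≤ ‖exp (τ • B)‖ * ‖exp (((τ * (ℓ - δ) : ℝ) : ℂ) • (1 : V →L[ℂ] V))‖ := norm_mul_le _ _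
    _ ≤ Mδ * Real.exp (τ * (ℓ - δ)) := by
        apply mul_le_mul (hMδ τ hτ) h1 (norm_nonneg _)
        exact le_trans (norm_nonneg _) (hMδ 0 le_rfl)

open NormedSpace MeasureTheory Set intervalIntegral in
lemma key {V : Type*} [NormedAddCommGroup V] [NormedSpace ℂ V] [FiniteDimensional ℂ V]
    (A₀ : V →L[ℂ] V) (A : ℝ → (V →L[ℂ] V)) (hA : ContinuousOn A (Set.Iic 0))
    (E : ℝ → (V →L[ℂ] V)) (hE : ∀ t ≤ (0:ℝ), HasDerivAt E (A t * E t) t)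
    (ℓ δ Mδ c : ℝ)
    (hexp : ∀ τ : ℝ, τ ≤ 0 → ‖exp (τ • A₀)‖ ≤ Mδ * Real.exp (τ * (ℓ - δ)))
    (t t₁ : ℝ) (ht : t ≤ t₁) (ht₁ : t₁ ≤ 0)
    (hc : ∀ s ∈ Set.Icc t t₁, Mδ * ‖A s - A₀‖ ≤ c) (hc0 : 0 ≤ c) :
    ‖E t‖ ≤ Mδ * ‖E t₁‖ * Real.exp (c * (t₁ - t)) * Real.exp ((t - t₁) * (ℓ - δ)) := by
  have hEcont : ContinuousOn E (Set.Iic 0) := fun x hx =>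
    ((hE x hx).continuousAt).continuousWithinAt
  set u : ℝ → ℝ := fun s => ‖E s‖ * Real.exp (-(s * (ℓ - δ))) with hu_def
  have hucontIic : ContinuousOn u (Set.Iic 0) :=
    hEcont.norm.mul (Real.continuous_exp.comp
      (continuous_id.mul continuous_const).neg).continuousOn
  have hucont : ContinuousOn u (Set.Icc t t₁) :=
    hucontIic.mono (fun x hx => le_trans hx.2 ht₁)
  -- exponential factor is positive
  have main : ∀ r ∈ Set.Icc t t₁, u r ≤ Mδ * u t₁ + c * ∫ s in r..t₁, u s := by
    intro r hr
    have hr1 : r ≤ t₁ := hr.2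
    have hr0 : r ≤ 0 := le_trans hr1 ht₁
    have hsub : Set.Icc r t₁ ⊆ Set.Iic 0 := fun x hx => le_trans hx.2 ht₁
    set g : ℝ → (V →L[ℂ] V) := fun s' => exp ((r - s') • A₀) * E s' with hg_def
    set g' : ℝ → (V →L[ℂ] V) :=
      fun s => exp ((r - s) • A₀) * ((A s - A₀) * E s) with hg'_def
    have hgderiv : ∀ s ∈ Set.uIcc t₁ r, HasDerivAt g (g' s) s := by
      intro s hs
      rw [Set.uIcc_of_ge hr1] at hs
      have hs0 : s ≤ 0 := le_trans hs.2 ht₁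
      have h1 : HasDerivAt (fun s' : ℝ => (r - s')) (-1) s := (hasDerivAt_id s).const_sub r
      have h2 : HasDerivAt (fun w : ℝ => exp (w • A₀)) (exp ((r - s) • A₀) * A₀) (r - s) := by
        have := hasDerivAt_exp_smul_const (𝕂 := ℝ) A₀ (r - s)
        exact this
      have h3 : HasDerivAt (fun s' : ℝ => exp ((r - s') • A₀))
          (-(exp ((r - s) • A₀) * A₀)) s := by
        simpa [Function.comp_def] using HasDerivAt.scomp s h2 h1
      have h4 := h3.fun_mul (hE s hs0)
      refine h4.congr_deriv ?_
      simp only [hg'_def]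
      noncomm_ring
    letI : NormedAlgebra ℚ (V →L[ℂ] V) := NormedAlgebra.restrictScalars ℚ ℂ (V →L[ℂ] V)
    have hexpcont : Continuous (fun s : ℝ => exp ((r - s) • A₀)) :=
      (NormedSpace.exp_continuous).comp ((continuous_const.sub continuous_id).smul continuous_const)
    have hg'cont : ContinuousOn g' (Set.Icc r t₁) :=
      hexpcont.continuousOn.mul
        (((hA.mono hsub).sub continuousOn_const).mul (hEcont.mono hsub))
    have hint : IntervalIntegrable g' volume t₁ r := by
      apply ContinuousOn.intervalIntegrable
      rwa [Set.uIcc_of_ge hr1]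
    have hFTC := intervalIntegral.integral_eq_sub_of_hasDerivAt hgderiv hint
    have hgr : g r = E r := by
      simp [hg_def, sub_self, zero_smul, NormedSpace.exp_zero, one_mul]
    have hEr : E r = exp ((r - t₁) • A₀) * E t₁ + ∫ s in t₁..r, g' s := by
      rw [hFTC, hgr]
      simp only [hg_def]
      abel
    -- pointwise bound on ‖g' s‖
    have hpt : ∀ s ∈ Set.Icc r t₁, ‖g' s‖ ≤ c * Real.exp (r * (ℓ - δ)) * u s := by
      intro s hs
      have hrs : r - s ≤ 0 := by linarith [hs.1]
      have h1 : ‖g' s‖ ≤ ‖exp ((r - s) • A₀)‖ * (‖A s - A₀‖ * ‖E s‖) :=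
        le_trans (norm_mul_le _ _) (by gcongr; exact norm_mul_le _ _)
      have h2 : ‖exp ((r - s) • A₀)‖ * (‖A s - A₀‖ * ‖E s‖)
          ≤ (Mδ * Real.exp ((r - s) * (ℓ - δ))) * (‖A s - A₀‖ * ‖E s‖) := by
        apply mul_le_mul_of_nonneg_right (hexp _ hrs)
        positivity
      have h3 : (Mδ * Real.exp ((r - s) * (ℓ - δ))) * (‖A s - A₀‖ * ‖E s‖)
          = (Mδ * ‖A s - A₀‖) * (Real.exp ((r - s) * (ℓ - δ)) * ‖E s‖) := by ring
      have h4 : (Mδ * ‖A s - A₀‖) * (Real.exp ((r - s) * (ℓ - δ)) * ‖E s‖)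
          ≤ c * (Real.exp ((r - s) * (ℓ - δ)) * ‖E s‖) := by
        apply mul_le_mul_of_nonneg_right
          (hc s ⟨le_trans hr.1 hs.1, hs.2⟩)
        positivity
      have h5 : c * (Real.exp ((r - s) * (ℓ - δ)) * ‖E s‖)
          = c * Real.exp (r * (ℓ - δ)) * u s := by
        simp only [hu_def]
        rw [show (r - s) * (ℓ - δ) = r * (ℓ - δ) + -(s * (ℓ - δ)) by ring, Real.exp_add]
        ring
      linarith
    have huIcc : Set.uIcc r t₁ = Set.Icc r t₁ := Set.uIcc_of_le hr1
    have huint : IntervalIntegrable u volume r t₁ :=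
      ContinuousOn.intervalIntegrable (by rw [huIcc]; exact hucontIic.mono hsub)
    have hnorm : ‖∫ s in t₁..r, g' s‖ ≤ c * Real.exp (r * (ℓ - δ)) * ∫ s in r..t₁, u s := by
      rw [intervalIntegral.integral_symm, norm_neg]
      calc ‖∫ s in r..t₁, g' s‖ ≤ ∫ s in r..t₁, ‖g' s‖ :=
            intervalIntegral.norm_integral_le_integral_norm hr1
        _ ≤ ∫ s in r..t₁, c * Real.exp (r * (ℓ - δ)) * u s := by
            apply intervalIntegral.integral_mono_on hr1 _ _ hpt
            · exact hint.symm.norm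
            · exact ContinuousOn.intervalIntegrable
                (by rw [huIcc]; exact continuous_const.continuousOn.mul (hucontIic.mono hsub))
        _ = c * Real.exp (r * (ℓ - δ)) * ∫ s in r..t₁, u s := by
            rw [intervalIntegral.integral_const_mul]
    have hfirst : ‖exp ((r - t₁) • A₀) * E t₁‖ ≤ Real.exp (r * (ℓ - δ)) * (Mδ * u t₁) := by
      calc ‖exp ((r - t₁) • A₀) * E t₁‖ ≤ ‖exp ((r - t₁) • A₀)‖ * ‖E t₁‖ := norm_mul_le _ _
        _ ≤ (Mδ * Real.exp ((r - t₁) * (ℓ - δ))) * ‖E t₁‖ :=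
            mul_le_mul_of_nonneg_right (hexp _ (by linarith)) (norm_nonneg _)
        _ = Real.exp (r * (ℓ - δ)) * (Mδ * u t₁) := by
            simp only [hu_def]
            rw [show (r - t₁) * (ℓ - δ) = r * (ℓ - δ) + -(t₁ * (ℓ - δ)) by ring, Real.exp_add]
            ring
    have hfin : ‖E r‖ ≤ Real.exp (r * (ℓ - δ)) * (Mδ * u t₁ + c * ∫ s in r..t₁, u s) := by
      calc ‖E r‖ = ‖exp ((r - t₁) • A₀) * E t₁ + ∫ s in t₁..r, g' s‖ := by rw [← hEr]
        _ ≤ ‖exp ((r - t₁) • A₀) * E t₁‖ + ‖∫ s in t₁..r, g' s‖ := norm_add_le _ _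
        _ ≤ Real.exp (r * (ℓ - δ)) * (Mδ * u t₁)
            + c * Real.exp (r * (ℓ - δ)) * ∫ s in r..t₁, u s := add_le_add hfirst hnorm
        _ = Real.exp (r * (ℓ - δ)) * (Mδ * u t₁ + c * ∫ s in r..t₁, u s) := by ring
    calc u r = ‖E r‖ * Real.exp (-(r * (ℓ - δ))) := rfl
      _ ≤ (Real.exp (r * (ℓ - δ)) * (Mδ * u t₁ + c * ∫ s in r..t₁, u s))
          * Real.exp (-(r * (ℓ - δ))) :=
          mul_le_mul_of_nonneg_right hfin (Real.exp_nonneg _)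
      _ = Mδ * u t₁ + c * ∫ s in r..t₁, u s := by
          rw [mul_comm, ← mul_assoc, ← Real.exp_add]
          simp
  have hg := gronwall_back ht hucont hc0 main t ⟨le_rfl, ht⟩
  -- hg : u t ≤ (Mδ * u t₁) * Real.exp (c * (t₁ - t))
  have hconv : ‖E t‖ = u t * Real.exp (t * (ℓ - δ)) := by
    simp only [hu_def]
    rw [mul_assoc, ← Real.exp_add]
    simp
  rw [hconv]
  calc u t * Real.exp (t * (ℓ - δ))
      ≤ ((Mδ * u t₁) * Real.exp (c * (t₁ - t))) * Real.exp (t * (ℓ - δ)) :=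
        mul_le_mul_of_nonneg_right hg (Real.exp_nonneg _)
    _ = Mδ * ‖E t₁‖ * Real.exp (c * (t₁ - t)) * Real.exp ((t - t₁) * (ℓ - δ)) := by
        simp only [hu_def]
        rw [show (t - t₁) * (ℓ - δ) = -(t₁ * (ℓ - δ)) + t * (ℓ - δ) by ring, Real.exp_add]
        ring

/-- If `‖A(t)-A₀‖ < (ε/2)/M(A₀,ε/2)` for all `t ≤ t₀`, then the solution of
`E'(t) = A(t)E(t)`, `E(0)=id` satisfies `‖E(t)‖ ≤ C·exp(t(ℓ(A₀)-ε))` for all `t ≤ 0`,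
with `C = M(A₀,ε/2)·M(A₀,ε)·exp(-t₀·M(A₀,ε)·sup_{t≤0}‖A(t)-A₀‖)`, where
`M(A₀,δ) = sup_{t≤0}‖exp(t(A₀-ℓ(A₀)+δ))‖` and `ℓ(A₀)` is the minimal real part of
the spectrum of `A₀`. -/
theorem stmt3 {V : Type*} [NormedAddCommGroup V] [NormedSpace ℂ V]
    [FiniteDimensional ℂ V] (A₀ : V →L[ℂ] V)
    (A : ℝ → (V →L[ℂ] V)) (hA : ContinuousOn A (Set.Iic 0))
    (E : ℝ → (V →L[ℂ] V)) (hE0 : E 0 = 1)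
    (hE : ∀ t ≤ (0:ℝ), HasDerivAt E (A t * E t) t)
    (ℓ : ℝ) (hℓ : ℓ = sInf (Complex.re '' spectrum ℂ A₀))
    (ε : ℝ) (hε : 0 < ε)
    (M : ℝ → ℝ)
    (hMbdd : ∀ δ : ℝ, 0 < δ → BddAbove ((fun t : ℝ =>
      ‖NormedSpace.exp (t • (A₀ - (ℓ : ℂ) • (1 : V →L[ℂ] V) + (δ : ℂ) • (1 : V →L[ℂ] V)))‖)
        '' Set.Iic 0))
    (hM : ∀ δ : ℝ, M δ = sSup ((fun t : ℝ =>
      ‖NormedSpace.exp (t • (A₀ - (ℓ : ℂ) • (1 : V →L[ℂ] V) + (δ : ℂ) • (1 : V →L[ℂ] V)))‖)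
        '' Set.Iic 0))
    (K : ℝ)
    (hKbdd : BddAbove ((fun s : ℝ => ‖A s - A₀‖) '' Set.Iic 0))
    (hK : K = sSup ((fun s : ℝ => ‖A s - A₀‖) '' Set.Iic 0))
    (t₀ : ℝ) (ht₀ : t₀ ≤ 0)
    (hnear : ∀ t ≤ t₀, ‖A t - A₀‖ < (ε / 2) / M (ε / 2))
    (C : ℝ) (hC : C = M (ε / 2) * M ε * Real.exp (-t₀ * M ε * K)) :
    ∀ t ≤ (0:ℝ), ‖E t‖ ≤ C * Real.exp (t * (ℓ - ε)) := by
  have hMge : ∀ δ : ℝ, 0 < δ → ∀ τ : ℝ, τ ≤ 0 →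
      ‖NormedSpace.exp (τ • (A₀ - (ℓ : ℂ) • (1 : V →L[ℂ] V) + (δ : ℂ) • (1 : V →L[ℂ] V)))‖
        ≤ M δ := by
    intro δ hδ τ hτ
    rw [hM δ]
    exact le_csSup (hMbdd δ hδ) ⟨τ, hτ, rfl⟩
  have hM0 : ∀ δ : ℝ, 0 < δ → 0 ≤ M δ := fun δ hδ =>
    le_trans (norm_nonneg _) (hMge δ hδ 0 le_rfl)
  intro t ht
  rcases subsingleton_or_nontrivial V with hV | hV
  · have hEt : E t = 0 := Subsingleton.elim _ _
    rw [hEt, norm_zero, hC]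
    have h1 := hM0 (ε / 2) (by linarith)
    have h2 := hM0 ε hε
    positivity
  · have hnorm1 : ‖(1 : V →L[ℂ] V)‖ = 1 := by
      rw [ContinuousLinearMap.one_def, ContinuousLinearMap.norm_id]
    have hM1 : ∀ δ : ℝ, 0 < δ → 1 ≤ M δ := by
      intro δ hδ
      have h0 : ‖NormedSpace.exp ((0:ℝ) • (A₀ - (ℓ : ℂ) • (1 : V →L[ℂ] V)
          + (δ : ℂ) • (1 : V →L[ℂ] V)))‖ = 1 := by
        rw [zero_smul, NormedSpace.exp_zero, hnorm1]
      calc (1:ℝ) = _ := h0.symm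
        _ ≤ M δ := hMge δ hδ 0 le_rfl
    have hMε1 : 1 ≤ M ε := hM1 ε hε
    have hMε21 : 1 ≤ M (ε / 2) := hM1 (ε / 2) (by linarith)
    have hMεpos : 0 < M ε := lt_of_lt_of_le one_pos hMε1
    have hMε2pos : 0 < M (ε / 2) := lt_of_lt_of_le one_pos hMε21
    have hexpε := exp_norm_bound A₀ ℓ ε (M ε) (hMge ε hε)
    have hexpε2 := exp_norm_bound A₀ ℓ (ε / 2) (M (ε / 2)) (hMge (ε / 2) (by linarith))
    have hKb : ∀ s : ℝ, s ≤ 0 → ‖A s - A₀‖ ≤ K := by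
      intro s hs
      rw [hK]
      exact le_csSup hKbdd ⟨s, hs, rfl⟩
    have hK0 : 0 ≤ K := le_trans (norm_nonneg (A 0 - A₀)) (hKb 0 le_rfl)
    -- step 1 : bound on [t₀, 0]
    have step1 : ∀ r : ℝ, t₀ ≤ r → r ≤ 0 →
        ‖E r‖ ≤ M ε * Real.exp (M ε * K * (0 - r)) * Real.exp (r * (ℓ - ε)) := by
      intro r hr1 hr2
      have hc : ∀ s ∈ Set.Icc r (0:ℝ), M ε * ‖A s - A₀‖ ≤ M ε * K := by
        intro s hs
        exact mul_le_mul_of_nonneg_left (hKb s hs.2) hMεpos.le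
      have := key A₀ A hA E hE ℓ ε (M ε) (M ε * K) hexpε r 0 hr2 le_rfl hc
        (mul_nonneg hMεpos.le hK0)
      rw [hE0, hnorm1] at this
      calc ‖E r‖ ≤ M ε * 1 * Real.exp (M ε * K * (0 - r)) * Real.exp ((r - 0) * (ℓ - ε)) := this
        _ = M ε * Real.exp (M ε * K * (0 - r)) * Real.exp (r * (ℓ - ε)) := by ring_nf
    by_cases htt : t₀ ≤ t
    · -- t ∈ [t₀, 0]
      have h1 := step1 t htt ht
      have h2 : Real.exp (M ε * K * (0 - t)) ≤ Real.exp (-t₀ * M ε * K) :=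
        Real.exp_le_exp.mpr (by nlinarith [mul_nonneg hMεpos.le hK0])
      calc ‖E t‖ ≤ M ε * Real.exp (M ε * K * (0 - t)) * Real.exp (t * (ℓ - ε)) := h1
        _ ≤ M ε * Real.exp (-t₀ * M ε * K) * Real.exp (t * (ℓ - ε)) := by
            have := mul_le_mul_of_nonneg_left h2 hMεpos.le
            exact mul_le_mul_of_nonneg_right this (Real.exp_nonneg _)
        _ ≤ M (ε / 2) * (M ε * Real.exp (-t₀ * M ε * K) * Real.exp (t * (ℓ - ε))) := by
            apply le_mul_of_one_le_left _ hMε21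
            positivity
        _ = C * Real.exp (t * (ℓ - ε)) := by rw [hC]; ring
    · -- t < t₀
      push_neg at htt
      have hc2 : ∀ s ∈ Set.Icc t t₀, M (ε / 2) * ‖A s - A₀‖ ≤ ε / 2 := by
        intro s hs
        have h1 := (hnear s hs.2).le
        calc M (ε / 2) * ‖A s - A₀‖ ≤ M (ε / 2) * ((ε / 2) / M (ε / 2)) :=
              mul_le_mul_of_nonneg_left h1 hMε2pos.le
          _ = ε / 2 := by field_simp
      have step2 := key A₀ A hA E hE ℓ (ε / 2) (M (ε / 2)) (ε / 2) hexpε2 t t₀ htt.le ht₀ hc2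
        (by linarith)
      have hEt₀ := step1 t₀ le_rfl ht₀
      calc ‖E t‖ ≤ M (ε / 2) * ‖E t₀‖ * Real.exp ((ε / 2) * (t₀ - t))
            * Real.exp ((t - t₀) * (ℓ - ε / 2)) := step2
        _ ≤ M (ε / 2) * (M ε * Real.exp (M ε * K * (0 - t₀)) * Real.exp (t₀ * (ℓ - ε)))
            * Real.exp ((ε / 2) * (t₀ - t)) * Real.exp ((t - t₀) * (ℓ - ε / 2)) := by
            gcongr
        _ = C * Real.exp (t * (ℓ - ε)) := by
            rw [hC]
            rw [show M ε * K * (0 - t₀) = -t₀ * M ε * K by ring]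
            have hexpeq : Real.exp (t₀ * (ℓ - ε)) * Real.exp ((ε / 2) * (t₀ - t))
                * Real.exp ((t - t₀) * (ℓ - ε / 2)) = Real.exp (t * (ℓ - ε)) := by
              rw [← Real.exp_add, ← Real.exp_add]
              ring_nf
            rw [← hexpeq]
            ring
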